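/- Let ω : ℝ → ℝ³ be constant (ω̇ = 0), I = diag(A,B,C) positive definite, λ ≠ 0, β > 0, and z : ℝ → ℝ³ C¹, satisfying I·ω̇ − λ e₃ × (I·ω) − λ C ω × e₃ = β² e₃ × z and ż − ω × e₃ − λ C e₃ × z = 0 for all t. Then ż ≡ 0, i.e., z is constant. -/

import Mathlib

open Matrix

/-- `e₃ = (0,0,1)`. -/
noncomputable def e3 : Fin 3 → ℝ := ![0, 0, 1]

/-- `I·w = (A w₁, B w₂, C w₃)` for `I = diag(A,B,C)`. -/
noncomputable def Iv (A B C : ℝ) (w : Fin 3 → ℝ) : Fin 3 → ℝ := ![A * w 0, B * w 1, C * w 2]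

/-- On the ω-limit set: if `ω` is constant (`ω̇ = 0`) and
`I·ω̇ − λ e₃ × (I·ω) − λC ω × e₃ = β² e₃ × z`, `ż − ω × e₃ − λC e₃ × z = 0`,
then `ż ≡ 0`, i.e. `z` is constant. -/
theorem stmt10 (lam β A B C : ℝ) (hlam : lam ≠ 0) (hβ : 0 < β)
    (hA : 0 < A) (hB : 0 < B) (hC : 0 < C)
    (ω : Fin 3 → ℝ) (z : ℝ → (Fin 3 → ℝ)) (hz : Differentiable ℝ z)
    (heq1 : ∀ t : ℝ,
      Iv A B C 0 - lam • crossProduct e3 (Iv A B C ω)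
        - (lam * C) • crossProduct ω e3 = β ^ 2 • crossProduct e3 (z t))
    (heq2 : ∀ t : ℝ,
      deriv z t - crossProduct ω e3 - (lam * C) • crossProduct e3 (z t) = 0) :
    (∀ t : ℝ, deriv z t = 0) ∧ ∀ t s : ℝ, z t = z s := by
  have hβ2 : β ^ 2 ≠ 0 := by positivity
  -- components 0 and 1 of z are constant in time, from heq1
  have hc : ∀ t s : ℝ, z t 0 = z s 0 ∧ z t 1 = z s 1 := by
    intro t s
    have h := (heq1 t).symm.trans (heq1 s)
    have h0 := congrFun h 0
    have h1 := congrFun h 1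
    simp [cross_apply, e3] at h0 h1
    exact ⟨h1.resolve_right hβ.ne', h0.resolve_right hβ.ne'⟩
  -- componentwise derivatives
  have hcomp : ∀ (t : ℝ) (i : Fin 3),
      HasDerivAt (fun u => z u i) (deriv z t i) t := by
    intro t i
    have h := (hz t).hasDerivAt.hasFDerivAt
    have h2 := hasFDerivAt_pi'.1 h i
    have := h2.hasDerivAt
    simpa using this
  have hd : ∀ t : ℝ, deriv z t = 0 := by
    intro t
    funext i
    fin_cases i
    · have hf : (fun u => z u 0) = fun _ => z 0 0 := funext fun u => (hc u 0).1
      have h := hcomp t 0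
      rw [hf] at h
      simpa using h.unique (hasDerivAt_const t (z 0 0))
    · have hf : (fun u => z u 1) = fun _ => z 0 1 := funext fun u => (hc u 0).2
      have h := hcomp t 1
      rw [hf] at h
      simpa using h.unique (hasDerivAt_const t (z 0 1))
    · have h := congrFun (heq2 t) 2
      simp [cross_apply, e3] at h
      exact h
  refine ⟨hd, fun t s => ?_⟩
  have hf0 : ∀ u : ℝ, fderiv ℝ z u = 0 := by
    intro u
    have h := (hz u).hasDerivAt
    rw [hd u] at h
    have h2 := hasDerivAt_iff_hasFDerivAt.mp h
    rw [h2.fderiv]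
    ext x
    simp
  exact is_const_of_fderiv_eq_zero hz hf0 t s
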